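/- Let P* be a positive equilibrium and q_{ij} ≥ 0 satisfy the balance condition ∑_{j≠i} q_{ij} p*_j = (∑_{j≠i} q_{ji}) p*_i. Then along solutions of the Kolmogorov equation, the quadratic divergence H_2(P‖P*) = ∑_i (p_i − p*_i)²/p*_i has time derivative dH_2/dt = −∑_{i≠j} q_{ij} p*_j (p_i/p*_i − p_j/p*_j)² ≤ 0. -/

import Mathlib

lemma swap_erase_sum {n : ℕ} (f : Fin n → Fin n → ℝ) :
    ∑ i, ∑ j ∈ Finset.univ.erase i, f i j
      = ∑ i, ∑ j ∈ Finset.univ.erase i, f j i := by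
  rw [Finset.sum_comm' (t' := Finset.univ) (s' := fun j => Finset.univ.erase j)
    (by intro i j; simp [Finset.mem_erase, ne_comm])]

/-- Along solutions of the Kolmogorov equation of a Markov chain
with positive equilibrium `P*`, the quadratic divergence
`H₂(P‖P*) = ∑ᵢ (pᵢ − p*ᵢ)²/p*ᵢ` has time derivative
`−∑_{i≠j} q_{ij} p*_j (pᵢ/p*ᵢ − p_j/p*_j)² ≤ 0`. -/
theorem H2_time_derivative
    (n : ℕ) (q : Fin n → Fin n → ℝ) (ps : Fin n → ℝ) (p : ℝ → Fin n → ℝ) (t : ℝ)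
    (hq : ∀ i j, i ≠ j → 0 ≤ q i j)
    (hps : ∀ i, 0 < ps i)
    (hbal : ∀ i, ∑ j ∈ Finset.univ.erase i, q i j * ps j
        = (∑ j ∈ Finset.univ.erase i, q j i) * ps i)
    (hkol : ∀ i, HasDerivAt (fun s => p s i)
        (∑ j ∈ Finset.univ.erase i, (q i j * p t j - q j i * p t i)) t) :
    HasDerivAt (fun s => ∑ i, (p s i - ps i) ^ 2 / ps i)
        (-∑ i, ∑ j ∈ Finset.univ.erase i,
            q i j * ps j * (p t i / ps i - p t j / ps j) ^ 2) t ∧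
    -∑ i, ∑ j ∈ Finset.univ.erase i,
        q i j * ps j * (p t i / ps i - p t j / ps j) ^ 2 ≤ 0 := by
  have hps0 : ∀ i, ps i ≠ 0 := fun i => (hps i).ne'
  constructor
  · have hd : ∀ i : Fin n, HasDerivAt (fun s => (p s i - ps i) ^ 2 / ps i)
        (∑ j ∈ Finset.univ.erase i,
          (2 * (p t i - ps i) * (q i j * p t j - q j i * p t i)) / ps i) t := by
      intro i
      have h1 := (((hkol i).sub_const (ps i)).pow 2).div_const (ps i)
      refine h1.congr_deriv ?_
      rw [← Finset.sum_div, ← Finset.mul_sum]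
      norm_num
    have hsum := HasDerivAt.fun_sum (u := Finset.univ) (fun i _ => hd i)
    have key : (∑ i, ∑ j ∈ Finset.univ.erase i,
          (2 * (p t i - ps i) * (q i j * p t j - q j i * p t i)) / ps i)
        = -∑ i, ∑ j ∈ Finset.univ.erase i,
            q i j * ps j * (p t i / ps i - p t j / ps j) ^ 2 := by
      rw [eq_neg_iff_add_eq_zero, ← Finset.sum_add_distrib]
      have merge : (∑ i : Fin n, ((∑ j ∈ Finset.univ.erase i,
              (2 * (p t i - ps i) * (q i j * p t j - q j i * p t i)) / ps i)
            + ∑ j ∈ Finset.univ.erase i,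
              q i j * ps j * (p t i / ps i - p t j / ps j) ^ 2))
          = ∑ i : Fin n, ∑ j ∈ Finset.univ.erase i,
              (((2 * q j i * p t i - q j i * p t i ^ 2 / ps i)
                  - (2 * q i j * p t j - q i j * p t j ^ 2 / ps j))
                + (- (q j i * (p t i ^ 2 / ps i))
                  + q i j * ps j * (p t i ^ 2 / ps i ^ 2))) := by
        refine Finset.sum_congr rfl fun i _ => ?_
        rw [← Finset.sum_add_distrib]
        refine Finset.sum_congr rfl fun j hj => ?_
        have hi := hps0 i
        have hj' := hps0 j
        field_simp
        ring
      rw [merge]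
      have split : (∑ i : Fin n, ∑ j ∈ Finset.univ.erase i,
            (((2 * q j i * p t i - q j i * p t i ^ 2 / ps i)
                - (2 * q i j * p t j - q i j * p t j ^ 2 / ps j))
              + (- (q j i * (p t i ^ 2 / ps i))
                + q i j * ps j * (p t i ^ 2 / ps i ^ 2))))
          = (∑ i : Fin n, ∑ j ∈ Finset.univ.erase i,
              ((2 * q j i * p t i - q j i * p t i ^ 2 / ps i)
                - (2 * q i j * p t j - q i j * p t j ^ 2 / ps j)))
            + ∑ i : Fin n, ∑ j ∈ Finset.univ.erase i,
              (- (q j i * (p t i ^ 2 / ps i))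
                + q i j * ps j * (p t i ^ 2 / ps i ^ 2)) := by
        rw [← Finset.sum_add_distrib]
        exact Finset.sum_congr rfl fun i _ => Finset.sum_add_distrib
      rw [split]
      have h1 : (∑ i : Fin n, ∑ j ∈ Finset.univ.erase i,
            ((2 * q j i * p t i - q j i * p t i ^ 2 / ps i)
              - (2 * q i j * p t j - q i j * p t j ^ 2 / ps j))) = 0 := by
        have hs := swap_erase_sum (n := n)
          (fun i j => 2 * q j i * p t i - q j i * p t i ^ 2 / ps i)
        calc (∑ i : Fin n, ∑ j ∈ Finset.univ.erase i,
              ((2 * q j i * p t i - q j i * p t i ^ 2 / ps i)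
                - (2 * q i j * p t j - q i j * p t j ^ 2 / ps j)))
            = (∑ i : Fin n, ∑ j ∈ Finset.univ.erase i,
                (2 * q j i * p t i - q j i * p t i ^ 2 / ps i))
              - ∑ i : Fin n, ∑ j ∈ Finset.univ.erase i,
                (2 * q i j * p t j - q i j * p t j ^ 2 / ps j) := by
              rw [← Finset.sum_sub_distrib]
              exact Finset.sum_congr rfl fun i _ => Finset.sum_sub_distrib _ _
          _ = 0 := by rw [hs]; ring
      have h2 : ∀ i : Fin n, (∑ j ∈ Finset.univ.erase i,
            (- (q j i * (p t i ^ 2 / ps i))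
              + q i j * ps j * (p t i ^ 2 / ps i ^ 2))) = 0 := by
        intro i
        have hrw : (∑ j ∈ Finset.univ.erase i,
              (- (q j i * (p t i ^ 2 / ps i))
                + q i j * ps j * (p t i ^ 2 / ps i ^ 2)))
            = (∑ j ∈ Finset.univ.erase i, q i j * ps j) * (p t i ^ 2 / ps i ^ 2)
              - (∑ j ∈ Finset.univ.erase i, q j i) * (p t i ^ 2 / ps i) := by
          rw [Finset.sum_mul, Finset.sum_mul, ← Finset.sum_sub_distrib]
          exact Finset.sum_congr rfl fun j _ => by ring
        rw [hrw, hbal i]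
        have hi := hps0 i
        field_simp
        ring
      rw [h1, zero_add]
      exact Finset.sum_eq_zero fun i _ => h2 i
    rw [← key]
    exact hsum
  · rw [neg_nonpos]
    refine Finset.sum_nonneg fun i _ => Finset.sum_nonneg fun j hj => ?_
    have hji : j ≠ i := (Finset.mem_erase.mp hj).1
    exact mul_nonneg (mul_nonneg (hq i j hji.symm) (hps j).le) (sq_nonneg _)
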